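/- For finite elementary event structures, weak history preserving bisimilarity implies isomorphism. -/

import Mathlib

/-- A labelled prime event structure over alphabet `A`. -/
structure PES (A : Type*) where
  E : Type*
  le : E → E → Prop
  conflict : E → E → Prop
  lab : E → A
  le_refl : ∀ e, le e e
  le_trans : ∀ e e' e'', le e e' → le e' e'' → le e e''
  le_antisymm : ∀ e e', le e e' → le e' e → e = e'
  finite_past : ∀ e, Set.Finite {e' | le e' e ∧ e' ≠ e}
  conflict_irrefl : ∀ e, ¬ conflict e e
  conflict_symm : ∀ e e', conflict e e' → conflict e' e
  conflict_inherit : ∀ e e' e'', le e e' → e ≠ e' → conflict e e'' → conflict e' e''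

namespace PES

variable {A : Type*}

/-- A coherence space: a PES with empty (strict) causality. -/
def IsCS (P : PES A) : Prop := ∀ e e', P.le e e' → e = e'

/-- An elementary event structure: a PES with empty conflict. -/
def IsEES (P : PES A) : Prop := ∀ e e', ¬ P.conflict e e'

/-- Concurrency. -/
def co (P : PES A) (e e' : P.E) : Prop :=
  ¬ P.le e e' ∧ ¬ P.le e' e ∧ ¬ P.conflict e e'

/-- Configurations: finite, conflict-free, downward-closed sets of events. -/
def Config (P : PES A) (X : Set P.E) : Prop :=
  X.Finite ∧ (∀ e ∈ X, ∀ e' ∈ X, ¬ P.conflict e e') ∧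
    (∀ e ∈ X, ∀ e', P.le e' e → e' ∈ X)

/-- Single-event labelled transition between configurations. -/
def Trans (P : PES A) (X : Set P.E) (a : A) (X' : Set P.E) : Prop :=
  P.Config X ∧ P.Config X' ∧ ∃ e, e ∉ X ∧ X' = insert e X ∧ P.lab e = a

/-- `X` can perform the sequential trace `w`. -/
def TraceFrom (P : PES A) : Set P.E → List A → Prop
  | X, [] => P.Config X
  | X, a :: w => ∃ X', P.Trans X a X' ∧ P.TraceFrom X' w

/-- Sequential traces of a PES. -/
def STr (P : PES A) (w : List A) : Prop := P.TraceFrom ∅ w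

/-- Interleaving trace equivalence. -/
def ITrEq (P Q : PES A) : Prop := ∀ w : List A, P.STr w ↔ Q.STr w

/-- Interleaving bisimulation. -/
def IBisim (P Q : PES A) (R : Set P.E → Set Q.E → Prop) : Prop :=
  R ∅ ∅ ∧ ∀ X Y, R X Y →
    (∀ a X', P.Trans X a X' → ∃ Y', Q.Trans Y a Y' ∧ R X' Y') ∧
    (∀ a Y', Q.Trans Y a Y' → ∃ X', P.Trans X a X' ∧ R X' Y')

/-- Interleaving bisimilarity. -/
def IBisimilar (P Q : PES A) : Prop := ∃ R, IBisim P Q R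

/-- Step transition, labelled by the multiset of labels of a nonempty set of
pairwise concurrent events added at once. -/
def StepTrans (P : PES A) (X : Set P.E) (m : Multiset A) (X' : Set P.E) : Prop :=
  P.Config X ∧ P.Config X' ∧ X ⊆ X' ∧ ∃ G : Finset P.E, ↑G = X' \ X ∧ G.Nonempty ∧
    (∀ e ∈ G, ∀ e' ∈ G, e ≠ e' → P.co e e') ∧ Multiset.map P.lab G.val = m

/-- `X` can perform the step trace `s`. -/
def StepTraceFrom (P : PES A) : Set P.E → List (Multiset A) → Prop
  | X, [] => P.Config X
  | X, m :: s => ∃ X', P.StepTrans X m X' ∧ P.StepTraceFrom X' s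

/-- Step traces of a PES. -/
def StTr (P : PES A) (s : List (Multiset A)) : Prop := P.StepTraceFrom ∅ s

/-- Step trace equivalence. -/
def STrEq (P Q : PES A) : Prop := ∀ s : List (Multiset A), P.StTr s ↔ Q.StTr s

/-- Step bisimulation. -/
def SBisim (P Q : PES A) (R : Set P.E → Set Q.E → Prop) : Prop :=
  R ∅ ∅ ∧ ∀ X Y, R X Y →
    (∀ m X', P.StepTrans X m X' → ∃ Y', Q.StepTrans Y m Y' ∧ R X' Y') ∧
    (∀ m Y', Q.StepTrans Y m Y' → ∃ X', P.StepTrans X m X' ∧ R X' Y')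

/-- Step bisimilarity. -/
def SBisimilar (P Q : PES A) : Prop := ∃ R, SBisim P Q R

/-- `f` restricts to a label-preserving order-isomorphism from `X` onto `Y`. -/
def IsoOn (P Q : PES A) (f : P.E → Q.E) (X : Set P.E) (Y : Set Q.E) : Prop :=
  Set.BijOn f X Y ∧ (∀ e ∈ X, ∀ e' ∈ X, (P.le e e' ↔ Q.le (f e) (f e'))) ∧
    ∀ e ∈ X, Q.lab (f e) = P.lab e

/-- The labelled posets induced by `X` and `Y` are isomorphic (same pomset). -/
def PIso (P Q : PES A) (X : Set P.E) (Y : Set Q.E) : Prop :=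
  ∃ f, IsoOn P Q f X Y

/-- Pomset trace equivalence: same sets of pomsets of configurations. -/
def PTrEq (P Q : PES A) : Prop :=
  (∀ X, P.Config X → ∃ Y, Q.Config Y ∧ PIso P Q X Y) ∧
  (∀ Y, Q.Config Y → ∃ X, P.Config X ∧ PIso P Q X Y)

/-- Pomset transition: strictly extending a configuration. -/
def PomTrans (P : PES A) (X X' : Set P.E) : Prop :=
  P.Config X ∧ P.Config X' ∧ X ⊂ X'

/-- Pomset bisimulation: matched extensions must add isomorphic pomsets. -/
def PBisim (P Q : PES A) (R : Set P.E → Set Q.E → Prop) : Prop :=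
  R ∅ ∅ ∧ ∀ X Y, R X Y →
    (∀ X', P.PomTrans X X' →
      ∃ Y', Q.PomTrans Y Y' ∧ PIso P Q (X' \ X) (Y' \ Y) ∧ R X' Y') ∧
    (∀ Y', Q.PomTrans Y Y' →
      ∃ X', P.PomTrans X X' ∧ PIso P Q (X' \ X) (Y' \ Y) ∧ R X' Y')

/-- Pomset bisimilarity. -/
def PBisimilar (P Q : PES A) : Prop := ∃ R, PBisim P Q R

/-- Weak history preserving bisimulation. -/
def WHBisim (P Q : PES A) (R : Set P.E → Set Q.E → Prop) : Prop :=
  R ∅ ∅ ∧ ∀ X Y, R X Y → PIso P Q X Y ∧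
    (∀ a X', P.Trans X a X' → ∃ Y', Q.Trans Y a Y' ∧ R X' Y') ∧
    (∀ a Y', Q.Trans Y a Y' → ∃ X', P.Trans X a X' ∧ R X' Y')

/-- Weak history preserving bisimilarity. -/
def WHBisimilar (P Q : PES A) : Prop := ∃ R, WHBisim P Q R

/-- History preserving bisimulation: triples `(X, Y, f)`. -/
def HBisim (P Q : PES A) (R : Set P.E → Set Q.E → (P.E → Q.E) → Prop) : Prop :=
  (∃ f, R ∅ ∅ f) ∧ ∀ X Y f, R X Y f → IsoOn P Q f X Y ∧
    (∀ a X', P.Trans X a X' →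
      ∃ Y' f', Q.Trans Y a Y' ∧ R X' Y' f' ∧ ∀ e ∈ X, f' e = f e) ∧
    (∀ a Y', Q.Trans Y a Y' →
      ∃ X' f', P.Trans X a X' ∧ R X' Y' f' ∧ ∀ e ∈ X, f' e = f e)

/-- History preserving bisimilarity. -/
def HBisimilar (P Q : PES A) : Prop := ∃ R, HBisim P Q R

/-- Closure under backward transitions, as needed for hereditary hp-bisimulations. -/
def Hereditary (P Q : PES A) (R : Set P.E → Set Q.E → (P.E → Q.E) → Prop) : Prop :=
  ∀ X Y f, R X Y f →
    (∀ a X', P.Trans X' a X → R X' (f '' X') f) ∧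
    (∀ a Y', Q.Trans Y' a Y → R {e ∈ X | f e ∈ Y'} Y' f)

/-- Hereditary history preserving bisimilarity. -/
def HHBisimilar (P Q : PES A) : Prop := ∃ R, HBisim P Q R ∧ Hereditary P Q R

/-- Isomorphism of PESs. -/
def Iso (P Q : PES A) : Prop :=
  ∃ f : P.E ≃ Q.E, (∀ e e', P.le e e' ↔ Q.le (f e) (f e')) ∧
    (∀ e e', P.conflict e e' ↔ Q.conflict (f e) (f e')) ∧
    ∀ e, Q.lab (f e) = P.lab e

end PES


namespace PES

variable {A : Type*}

lemma exists_min' (P : PES A) [Finite P.E] {S : Set P.E} (hS : S.Nonempty) :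
    ∃ e ∈ S, ∀ e' ∈ S, P.le e' e → e' = e := by
  have : IsTrans P.E (fun a b => P.le a b ∧ a ≠ b) :=
    ⟨fun a b c hab hbc => ⟨P.le_trans _ _ _ hab.1 hbc.1, fun h => hab.2
      (P.le_antisymm _ _ hab.1 (P.le_trans _ _ _ hbc.1 (h ▸ P.le_refl a)))⟩⟩
  have : IsIrrefl P.E (fun a b => P.le a b ∧ a ≠ b) := ⟨fun a h => h.2 rfl⟩
  have hwf : WellFounded (fun a b : P.E => P.le a b ∧ a ≠ b) :=
    Finite.wellFounded_of_trans_of_irrefl _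
  obtain ⟨e, heS, hmin⟩ := hwf.has_min S hS
  exact ⟨e, heS, fun e' he' hle => by
    by_contra hne; exact hmin e' he' ⟨hle, hne⟩⟩

lemma extend' (P : PES A) [Finite P.E] (hP : P.IsEES) {X : Set P.E} (hX : P.Config X)
    (hne : X ≠ Set.univ) : ∃ e ∉ X, P.Trans X (P.lab e) (insert e X) := by
  have hS : (Set.univ \ X).Nonempty := by
    rw [Set.diff_nonempty]; intro h
    exact hne (Set.eq_univ_of_univ_subset h)
  obtain ⟨e, he, hmin⟩ := exists_min' P hS
  have heX : e ∉ X := he.2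
  refine ⟨e, heX, hX, ?_, e, heX, rfl, rfl⟩
  refine ⟨Set.toFinite _, fun a _ b _ => hP a b, ?_⟩
  rintro a ha e' hle
  rcases ha with rfl | ha
  · by_cases h' : e' ∈ X
    · exact Set.mem_insert_of_mem _ h'
    · have := hmin e' ⟨Set.mem_univ _, h'⟩ hle
      exact this ▸ Set.mem_insert _ _
  · exact Set.mem_insert_of_mem _ (hX.2.2 a ha e' hle)

lemma reach' (P Q : PES A) [Finite P.E] (hP : P.IsEES) {R} (hR : WHBisim P Q R) :
    ∀ n (X : Set P.E) (Y : Set Q.E), R X Y → P.Config X → Q.Config Y →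
      (Set.univ \ X).ncard = n → ∃ Y', R Set.univ Y' ∧ Q.Config Y' := by
  intro n
  induction n with
  | zero =>
    intro X Y hXY hX hY hn
    have hX' : X = Set.univ := by
      have h0 : Set.univ \ X = ∅ := (Set.ncard_eq_zero (Set.toFinite _)).mp hn
      rw [Set.diff_eq_empty] at h0
      exact Set.eq_univ_of_univ_subset h0
    exact ⟨Y, hX' ▸ hXY, hY⟩
  | succ n ih =>
    intro X Y hXY hX hY hn
    have hne : X ≠ Set.univ := by
      intro h; rw [h, Set.diff_self] at hn; simp at hn
    obtain ⟨e, heX, htr⟩ := extend' P hP hX hne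
    obtain ⟨Y', htr', hR'⟩ := (hR.2 X Y hXY).2.1 _ _ htr
    have hXc : P.Config (insert e X) := htr.2.1
    have hYc : Q.Config Y' := htr'.2.1
    apply ih _ _ hR' hXc hYc
    have he : e ∈ Set.univ \ X := ⟨Set.mem_univ _, heX⟩
    have : Set.univ \ insert e X = (Set.univ \ X) \ {e} := by
      ext x; simp [Set.mem_diff]; tauto
    rw [this, Set.ncard_diff_singleton_of_mem he, hn]
    rfl

end PES

theorem finite_ees_whb_implies_iso {A : Type*} (P Q : PES A)
    (hP : P.IsEES) (hQ : Q.IsEES) (hPfin : Finite P.E) (hQfin : Finite Q.E)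
    (h : PES.WHBisimilar P Q) : PES.Iso P Q := by
  obtain ⟨R, hR⟩ := h
  have hcP : P.Config (∅ : Set P.E) := ⟨Set.finite_empty, by simp, by simp⟩
  have hcQ : Q.Config (∅ : Set Q.E) := ⟨Set.finite_empty, by simp, by simp⟩
  obtain ⟨Y, hRY, hYc⟩ := PES.reach' P Q hP hR (Set.univ \ (∅ : Set P.E)).ncard ∅ ∅ hR.1 hcP hcQ rfl
  have hYuniv : Y = Set.univ := by
    by_contra hne
    obtain ⟨e, heY, htr⟩ := PES.extend' Q hQ hYc hne
    obtain ⟨X', htr', _⟩ := (hR.2 _ _ hRY).2.2 _ _ htr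
    obtain ⟨e', he', _⟩ := htr'.2.2
    exact he' (Set.mem_univ e')
  subst hYuniv
  obtain ⟨f, hbij, hle, hlab⟩ := (hR.2 _ _ hRY).1
  have hfb : Function.Bijective f := Set.bijOn_univ.mp hbij
  refine ⟨Equiv.ofBijective f hfb, ?_, ?_, ?_⟩
  · exact fun e e' => hle e (Set.mem_univ e) e' (Set.mem_univ e')
  · exact fun e e' => iff_of_false (hP e e') (hQ _ _)
  · exact fun e => hlab e (Set.mem_univ e)
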